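/- Let e ≥ 2, r = 3, let B be a base tuple, and let L, M ∈ M̌(3,e) with L ∼ M, wt(L) = 2, and L indecomposable (for every partition of {1,2,3} into nonempty sets S, T there exist s ∈ S, t ∈ T with wt^L(s,t) ≥ 1). Set μ = Pt(B,L) and λ = Pt(B,M). Then μ ⤳ λ if and only if there exist columns i < j and k ∈ {1,2} such that L(k,j) = L(k+1,i) = M(k,i) = M(k+1,j) = 1, L(k,i) = L(k+1,j) = M(k,j) = M(k+1,i) = 0, and L(k′,i′) = M(k′,i′) whenever k′ ∉ {k, k+1} or i′ ∉ {i, j}. -/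

import Mathlib

open scoped Classical

namespace AK
noncomputable section



/-! ### Matrices, order from base tuple, abacus β-sets -/

/-- The order ≺ on columns determined by a base tuple `B`. -/
def prec {e : ℕ} (B : Fin e → ℕ) (i j : Fin e) : Prop :=
  B i < B j ∨ (B i = B j ∧ i < j)

/-- `rank B i = π(B)⁻¹(i)`, the number of columns ≺-smaller than `i`. -/
def rank {e : ℕ} (B : Fin e → ℕ) (i : Fin e) : Fin e :=
  ⟨(Finset.univ.filter (fun j => prec B j i)).card, by
    have h1 : (Finset.univ.filter (fun j => prec B j i)) ⊆ Finset.univ.erase i := by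
      intro j hj
      rw [Finset.mem_filter] at hj
      refine Finset.mem_erase.mpr ⟨?_, Finset.mem_univ j⟩
      rintro rfl
      rcases hj.2 with h | ⟨-, h⟩ <;> exact lt_irrefl _ h
    have h2 := Finset.card_le_card h1
    have h3 : (Finset.univ.erase i).card < Finset.univ.card :=
      Finset.card_erase_lt_of_mem (Finset.mem_univ i)
    simpa using lt_of_le_of_lt h2 h3⟩

/-- The number of beads on runner `i` of the abacus of component `s` of `Pt(B,M)`. -/
def beads {e r : ℕ} (B : Fin e → ℕ) (M : Fin r → Fin e → Bool) (s : Fin r) (i : Fin e) : ℕ :=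
  B i + (if M s (rank B i) then 1 else 0)

/-- The canonical β-set of component `s` of `Pt(B,M)`. -/
def Tset {e r : ℕ} (B : Fin e → ℕ) (M : Fin r → Fin e → Bool) (s : Fin r) : Set ℤ :=
  {z | z < 0 ∨ (0 ≤ z ∧ ∃ h : z.toNat % e < e, z.toNat / e < beads B M s ⟨z.toNat % e, h⟩)}

/-- `n_s`, the total number of beads of component `s`. -/
def nsum {e r : ℕ} (B : Fin e → ℕ) (M : Fin r → Fin e → Bool) (s : Fin r) : ℕ :=
  ∑ i : Fin e, beads B M s i

/-- Decreasing enumeration of a set of integers: `tEnum T x` is `t_{x+1}`. -/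
noncomputable def tEnum (T : Set ℤ) : ℕ → ℤ
  | 0 => sSup T
  | (x + 1) => sSup (T ∩ Set.Iio (tEnum T x))

/-- The multipartition `Pt(B,M)`: component `s`, part `p+1` (0-indexed parts). -/
noncomputable def PtPart {e r : ℕ} (B : Fin e → ℕ) (M : Fin r → Fin e → Bool)
    (s : Fin r) (p : ℕ) : ℕ :=
  (tEnum (Tset B M s) p + (p + 1) - (nsum B M s : ℤ)).toNat

/-- The multicharge of `Pt(B,M)`. -/
noncomputable def PtCharge {e r : ℕ} (B : Fin e → ℕ) (M : Fin r → Fin e → Bool)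
    (s : Fin r) : ZMod e :=
  (nsum B M s : ZMod e)

/-! ### Nodes, good nodes and Kleshchev multipartitions -/

/-- A node `(s, x, y)` (all 0-indexed). -/
abbrev Node (r : ℕ) := Fin r × ℕ × ℕ

/-- `A` is above `B`. -/
def NodeAbove {r : ℕ} (A B : Node r) : Prop :=
  A.1 < B.1 ∨ (A.1 = B.1 ∧ A.2.1 < B.2.1)

/-- The residue of a node. -/
def res {e r : ℕ} (a : Fin r → ZMod e) (A : Node r) : ZMod e :=
  a A.1 - (A.2.1 : ZMod e) + (A.2.2 : ZMod e)

/-- `A` is a removable node of `lam`. -/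
def Removable {r : ℕ} (lam : Fin r → ℕ → ℕ) (A : Node r) : Prop :=
  A.2.2 + 1 = lam A.1 A.2.1 ∧ lam A.1 (A.2.1 + 1) < lam A.1 A.2.1

/-- `A` is an addable node of `lam`. -/
def Addable {r : ℕ} (lam : Fin r → ℕ → ℕ) (A : Node r) : Prop :=
  A.2.2 = lam A.1 A.2.1 ∧ (A.2.1 = 0 ∨ lam A.1 A.2.1 < lam A.1 (A.2.1 - 1))

/-- `A` is a normal node of `lam`. -/
def Normal {e r : ℕ} (a : Fin r → ZMod e) (lam : Fin r → ℕ → ℕ) (A : Node r) : Prop :=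
  Removable lam A ∧
    ∀ B : Node r, Addable lam B → res a B = res a A → NodeAbove A B →
      Set.ncard {C : Node r | Addable lam C ∧ res a C = res a A ∧ NodeAbove A C ∧ NodeAbove C B}
        < Set.ncard {C : Node r | Removable lam C ∧ res a C = res a A ∧ NodeAbove A C ∧ NodeAbove C B}

/-- `A` is a good node of `lam`: normal, and highest among normal nodes of its residue. -/
def Good {e r : ℕ} (a : Fin r → ZMod e) (lam : Fin r → ℕ → ℕ) (A : Node r) : Prop :=
  Normal a lam A ∧ ∀ B : Node r, Normal a lam B → res a B = res a A → B ≠ A → NodeAbove A B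

/-- Remove the node `A` from `lam`. -/
def removeNode {r : ℕ} (lam : Fin r → ℕ → ℕ) (A : Node r) : Fin r → ℕ → ℕ :=
  fun s x => if s = A.1 ∧ x = A.2.1 then lam s x - 1 else lam s x

/-- Kleshchev multipartitions (for the multicharge `a`). -/
inductive IsKleshchev {e r : ℕ} (a : Fin r → ZMod e) : (Fin r → ℕ → ℕ) → Prop
  | empty : IsKleshchev a (fun _ _ => 0)
  | step (lam : Fin r → ℕ → ℕ) (A : Node r) (hA : Good a lam A)
      (h : IsKleshchev a (removeNode lam A)) : IsKleshchev a lam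

/-! ### Weights and bead swaps -/

/-- `δ₊^M(t,s)`. -/
def deltaP {e r : ℕ} (M : Fin r → Fin e → Bool) (t s : Fin r) : ℕ :=
  (Finset.univ.filter (fun i => M t i = true ∧ M s i = false)).card

/-- `wt^M(t,s)`. -/
def wtPair {e r : ℕ} (M : Fin r → Fin e → Bool) (t s : Fin r) : ℕ :=
  min (deltaP M t s) (deltaP M s t)

/-- `wt(M)`. -/
def wtM {e r : ℕ} (M : Fin r → Fin e → Bool) : ℕ :=
  ∑ t : Fin r, ∑ s ∈ Finset.univ.filter (· < t), wtPair M t s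

/-- `M'` is obtained from `M` by a bead swap. -/
def BeadSwap {e r : ℕ} (M M' : Fin r → Fin e → Bool) : Prop :=
  ∃ i j : Fin e, i ≠ j ∧ ∃ s t : Fin r, s ≠ t ∧
    M s i = true ∧ M t j = true ∧ M s j = false ∧ M t i = false ∧
    M' s i = false ∧ M' t j = false ∧ M' s j = true ∧ M' t i = true ∧
    (∀ s' i', (s' ≠ s ∧ s' ≠ t) ∨ (i' ≠ i ∧ i' ≠ j) → M' s' i' = M s' i')


/-! ### Moving rim hooks between consecutive components (r = 3) -/

/-- `T'` is obtained from the β-set `T` by removing a rim hook of length `h`,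
using the bead `β`. -/
def HookRemove (T T' : Set ℤ) (h : ℕ) (β : ℤ) : Prop :=
  β ∈ T ∧ (β - (h : ℤ)) ∉ T ∧ T' = (T \ {β}) ∪ {β - (h : ℤ)}

/-- `Pt(B,M)` is obtained from `Pt(B,L)` by removing a rim hook of length `h`
from component `k` (using bead `β`) and adding a rim hook of the same length
to component `k+1` (using bead `β'`). -/
def LeadsToWith {e : ℕ} (B : Fin e → ℕ) (L M : Fin 3 → Fin e → Bool)
    (k : Fin 2) (h : ℕ) (β β' : ℤ) : Prop :=
  1 ≤ h ∧
  HookRemove (Tset B L k.castSucc) (Tset B M k.castSucc) h β ∧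
  HookRemove (Tset B M k.succ) (Tset B L k.succ) h β' ∧
  (∀ s : Fin 3, s ≠ k.castSucc → s ≠ k.succ → Tset B L s = Tset B M s)

/-- `Pt(B,L) ⤳ Pt(B,M)`. -/
def LeadsTo {e : ℕ} (B : Fin e → ℕ) (L M : Fin 3 → Fin e → Bool) : Prop :=
  ∃ k h β β', LeadsToWith B L M k h β β'

/-- `Pt(B,L) ≈ Pt(B,M)`: as `⤳`, with the two rim hooks of equal leg lengths. -/
def RelEq {e : ℕ} (B : Fin e → ℕ) (L M : Fin 3 → Fin e → Bool) : Prop :=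
  ∃ k h β β', LeadsToWith B L M k h β β' ∧
    Set.ncard {w : ℤ | w ∈ Tset B L k.castSucc ∧ β - (h : ℤ) < w ∧ w < β}
      = Set.ncard {w : ℤ | w ∈ Tset B M k.succ ∧ β' - (h : ℤ) < w ∧ w < β'}

section Helpers

variable {e r : ℕ}

lemma prec_trichot (B : Fin e → ℕ) {i j : Fin e} (h : i ≠ j) :
    prec B i j ∨ prec B j i := by
  rcases lt_trichotomy (B i) (B j) with hb | hb | hb
  · exact Or.inl (Or.inl hb)
  · rcases lt_or_gt_of_ne (Fin.val_ne_of_ne h) with hij | hij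
    · exact Or.inl (Or.inr ⟨hb, hij⟩)
    · exact Or.inr (Or.inr ⟨hb.symm, hij⟩)
  · exact Or.inr (Or.inl hb)

lemma prec_irrefl (B : Fin e → ℕ) (i : Fin e) : ¬ prec B i i := by
  rintro (h | ⟨-, h⟩) <;> exact lt_irrefl _ h

lemma prec_trans (B : Fin e → ℕ) {i j k : Fin e} (h1 : prec B i j) (h2 : prec B j k) :
    prec B i k := by
  rcases h1 with h1 | ⟨h1, h1'⟩ <;> rcases h2 with h2 | ⟨h2, h2'⟩
  · exact Or.inl (h1.trans h2)
  · exact Or.inl (h2 ▸ h1)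
  · exact Or.inl (h1 ▸ h2)
  · exact Or.inr ⟨h1.trans h2, h1'.trans h2'⟩

lemma rank_lt_of_prec (B : Fin e → ℕ) {i j : Fin e} (h : prec B i j) :
    rank B i < rank B j := by
  have hsub : (Finset.univ.filter (fun x => prec B x i)) ⊂
      (Finset.univ.filter (fun x => prec B x j)) := by
    constructor
    · intro x hx
      rw [Finset.mem_filter] at hx ⊢
      exact ⟨hx.1, prec_trans B hx.2 h⟩
    · intro hcon
      have hi : i ∈ Finset.univ.filter (fun x => prec B x j) := by
        simp [h]
      have := hcon hi
      rw [Finset.mem_filter] at this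
      exact prec_irrefl B i this.2
  exact Finset.card_lt_card hsub

lemma rank_injective (B : Fin e → ℕ) : Function.Injective (rank B) := by
  intro i j hij
  by_contra hne
  have : (rank B i).val ≠ (rank B j).val ∨ (rank B j).val ≠ (rank B i).val := by
    rcases prec_trichot B hne with h | h
    · exact Or.inl (Nat.ne_of_lt (rank_lt_of_prec B h))
    · exact Or.inr (Nat.ne_of_lt (rank_lt_of_prec B h))
  rcases this with h | h <;> exact h (by rw [hij])
lemma rank_surjective (B : Fin e → ℕ) : Function.Surjective (rank B) :=
  Finite.surjective_of_injective (rank_injective B)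

lemma prec_of_rank_lt (B : Fin e → ℕ) {i j : Fin e} (h : rank B i < rank B j) :
    prec B i j := by
  have hne : i ≠ j := by rintro rfl; exact lt_irrefl _ h
  rcases prec_trichot B hne with h' | h'
  · exact h'
  · exact absurd (rank_lt_of_prec B h') (not_lt.mpr h.le)

/-- Membership in `Tset` for a canonically-presented nonnegative integer. -/
lemma mem_Tset_iff (B : Fin e → ℕ) (M : Fin r → Fin e → Bool)
    (s : Fin r) (p : Fin e) (m : ℕ) :
    ((p : ℤ) + (e : ℤ) * m ∈ Tset B M s) ↔ m < beads B M s p := by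
  have he : 0 < e := p.pos
  have hcast : (p : ℤ) + (e : ℤ) * m = ((p.val + e * m : ℕ) : ℤ) := by push_cast; ring
  have hz : ¬ ((p : ℤ) + (e : ℤ) * m < 0) := by rw [hcast]; exact not_lt.mpr (Int.natCast_nonneg _)
  have htn : ((p : ℤ) + (e : ℤ) * m).toNat = p.val + e * m := by
    rw [hcast, Int.toNat_natCast]
  have hmod : (p.val + e * m) % e = p.val := by
    rw [Nat.add_mul_mod_self_left, Nat.mod_eq_of_lt p.isLt]
  have hdiv : (p.val + e * m) / e = m := by
    rw [Nat.add_mul_div_left _ _ he, Nat.div_eq_of_lt p.isLt]; omega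
  have key : ∀ (hx : (p.val + e * m) % e < e),
      ((p.val + e * m) / e < beads B M s ⟨(p.val + e * m) % e, hx⟩ ↔ m < beads B M s p) := by
    intro hx
    have hfin : (⟨(p.val + e * m) % e, hx⟩ : Fin e) = p := Fin.ext hmod
    rw [hfin, hdiv]
  constructor
  · rintro (h | ⟨-, h2⟩)
    · exact absurd h hz
    · simp only [htn] at h2
      obtain ⟨hlt, h⟩ := h2
      exact (key hlt).mp h
  · intro h
    refine Or.inr ⟨not_lt.mp hz, ?_⟩
    rw [htn]
    have hx : (p.val + e * m) % e < e := by rw [hmod]; exact p.isLt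
    exact ⟨hx, (key hx).mpr h⟩

end Helpers
section Helpers2

variable {e r : ℕ}

lemma neg_mem_Tset (B : Fin e → ℕ) (M : Fin r → Fin e → Bool) (s : Fin r)
    {z : ℤ} (hz : z < 0) : z ∈ Tset B M s := Or.inl hz

lemma Tset_decomp (he : 0 < e) (B : Fin e → ℕ) {z : ℤ} (hz : 0 ≤ z) :
    ∃ (p : Fin e) (m : ℕ), z = (p : ℤ) + (e : ℤ) * m := by
  refine ⟨⟨z.toNat % e, Nat.mod_lt _ he⟩, z.toNat / e, ?_⟩
  have h1 : ((z.toNat % e + e * (z.toNat / e) : ℕ) : ℤ) = ((z.toNat : ℕ) : ℤ) := by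
    exact_mod_cast congrArg (Nat.cast : ℕ → ℤ) (Nat.mod_add_div z.toNat e)
  have hz' : ((z.toNat : ℤ)) = z := Int.toNat_of_nonneg hz
  push_cast at h1
  rw [← hz']
  exact h1.symm

lemma canon_uniq {p q : Fin e} {m n : ℕ}
    (h : (p : ℤ) + (e : ℤ) * m = (q : ℤ) + (e : ℤ) * n) : p = q ∧ m = n := by
  have hp := p.isLt
  have hq := q.isLt
  have h' : p.val + e * m = q.val + e * n := by exact_mod_cast h
  have hm : (p.val + e * m) % e = (q.val + e * n) % e := by rw [h']
  rw [Nat.add_mul_mod_self_left, Nat.add_mul_mod_self_left,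
    Nat.mod_eq_of_lt hp, Nat.mod_eq_of_lt hq] at hm
  refine ⟨Fin.ext hm, ?_⟩
  have he : 0 < e := p.pos
  nlinarith [h', hm]

lemma beads_cases (B : Fin e → ℕ) (M : Fin r → Fin e → Bool) (s : Fin r) (p : Fin e) :
    (M s (rank B p) = true ∧ beads B M s p = B p + 1) ∨
    (M s (rank B p) = false ∧ beads B M s p = B p) := by
  cases h : M s (rank B p) <;> simp [beads, h]

lemma entry_iff_mem (B : Fin e → ℕ) (M : Fin r → Fin e → Bool) (s : Fin r) (p : Fin e) :
    M s (rank B p) = true ↔ ((p : ℤ) + (e : ℤ) * (B p) ∈ Tset B M s) := by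
  rw [mem_Tset_iff]
  rcases beads_cases B M s p with ⟨h1, h2⟩ | ⟨h1, h2⟩ <;> simp [h1, h2]

/-- Rows equal implies β-sets equal. -/
lemma Tset_eq_of_rows_eq (B : Fin e → ℕ) (L M : Fin r → Fin e → Bool) (s t : Fin r)
    (h : ∀ i, L s i = M t i) : Tset B L s = Tset B M t := by
  have hb : ∀ p, beads B L s p = beads B M t p := by
    intro p; simp [beads, h (rank B p)]
  ext z
  simp only [Tset, Set.mem_setOf_eq, hb]

/-- β-sets equal implies rows equal. -/
lemma rows_eq_of_Tset_eq (B : Fin e → ℕ) (L M : Fin r → Fin e → Bool) (s t : Fin r)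
    (h : Tset B L s = Tset B M t) : ∀ i, L s i = M t i := by
  intro i
  obtain ⟨p, rfl⟩ := rank_surjective B i
  have h1 := entry_iff_mem B L s p
  have h2 := entry_iff_mem B M t p
  rw [h] at h1
  cases hL : L s (rank B p) <;> cases hM : M t (rank B p) <;> simp_all

end Helpers2
section Helpers3

variable {e r : ℕ}

lemma beads_lb (B : Fin e → ℕ) (M : Fin r → Fin e → Bool) (s : Fin r) (p : Fin e) :
    B p ≤ beads B M s p := Nat.le_add_right _ _

lemma beads_ub (B : Fin e → ℕ) (M : Fin r → Fin e → Bool) (s : Fin r) (p : Fin e) :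
    beads B M s p ≤ B p + 1 := by
  rcases beads_cases B M s p with ⟨-, h⟩ | ⟨-, h⟩ <;> omega

lemma entry_true_of_beads (B : Fin e → ℕ) (M : Fin r → Fin e → Bool) (s : Fin r)
    (p : Fin e) (h : B p < beads B M s p) : M s (rank B p) = true := by
  rcases beads_cases B M s p with ⟨h', -⟩ | ⟨-, h'⟩
  · exact h'
  · omega

lemma entry_false_of_beads (B : Fin e → ℕ) (M : Fin r → Fin e → Bool) (s : Fin r)
    (p : Fin e) (h : beads B M s p ≤ B p) : M s (rank B p) = false := by
  rcases beads_cases B M s p with ⟨-, h'⟩ | ⟨h', -⟩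
  · omega
  · exact h'

/-- Analysis of a hook removal between two β-sets coming from 0/1 matrices. -/
lemma hook_analysis (B : Fin e → ℕ) (L M : Fin r → Fin e → Bool) (s t : Fin r)
    {h : ℕ} (hh : 1 ≤ h) {β : ℤ}
    (H : HookRemove (Tset B L s) (Tset B M t) h β) :
    ∃ p q : Fin e, p ≠ q ∧
      β = (p : ℤ) + (e : ℤ) * (B p) ∧
      β - h = (q : ℤ) + (e : ℤ) * (B q) ∧
      L s (rank B p) = true ∧ M t (rank B p) = false ∧
      L s (rank B q) = false ∧ M t (rank B q) = true ∧
      (∀ i, i ≠ rank B p → i ≠ rank B q → L s i = M t i) := by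
  obtain ⟨hβL, hβhL, hTM⟩ := H
  have hβne : β ≠ β - (h : ℤ) := by omega
  have hβ0 : 0 ≤ β := by
    by_contra hc
    exact hβhL (neg_mem_Tset B L s (by omega))
  have hβh0 : 0 ≤ β - (h : ℤ) := by
    by_contra hc
    exact hβhL (neg_mem_Tset B L s (by omega))
  have he : 0 < e := by
    by_contra hc
    have : (0 : ℤ) ≤ β := hβ0
    have h0 : e = 0 := by omega
    subst h0
    rcases hβL with hneg | ⟨-, hlt, -⟩
    · omega
    · exact absurd hlt (by omega)
  obtain ⟨p, m, hpm⟩ := Tset_decomp he B hβ0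
  obtain ⟨q, n, hqn⟩ := Tset_decomp he B hβh0
  have hβM : β ∉ Tset B M t := by
    rw [hTM]
    rintro (⟨-, hne⟩ | hmem)
    · exact hne rfl
    · exact hβne (by simpa using hmem)
  have hβhM : β - (h : ℤ) ∈ Tset B M t := by
    rw [hTM]; exact Or.inr rfl
  rw [hpm, mem_Tset_iff] at hβL hβM
  rw [hqn, mem_Tset_iff] at hβhL hβhM
  rw [not_lt] at hβM
  rw [not_lt] at hβhL
  -- pin down m and n
  have hm : m = B p := le_antisymm
    (by have := beads_ub B L s p; omega)
    (le_trans (beads_lb B M t p) hβM)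
  have hn : n = B q := le_antisymm
    (by have := beads_ub B M t q; omega)
    (le_trans (beads_lb B L s q) hβhL)
  have hLp : L s (rank B p) = true := entry_true_of_beads B L s p (by omega)
  have hMp : M t (rank B p) = false := entry_false_of_beads B M t p (by omega)
  have hLq : L s (rank B q) = false := entry_false_of_beads B L s q (by omega)
  have hMq : M t (rank B q) = true := entry_true_of_beads B M t q (by omega)
  rw [hm] at hpm
  rw [hn] at hqn
  have hpq : p ≠ q := by
    rintro rfl
    omega
  refine ⟨p, q, hpq, hpm, hqn, hLp, hMp, hLq, hMq, ?_⟩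
  intro i hip hiq
  obtain ⟨w, rfl⟩ := rank_surjective B i
  have hwp : w ≠ p := fun hc => hip (by rw [hc])
  have hwq : w ≠ q := fun hc => hiq (by rw [hc])
  have hzw : ((w : ℤ) + (e : ℤ) * (B w)) ∈ Tset B M t ↔
      ((w : ℤ) + (e : ℤ) * (B w)) ∈ Tset B L s := by
    rw [hTM]
    constructor
    · rintro (⟨hmem, -⟩ | hmem)
      · exact hmem
      · exact absurd (canon_uniq (by rw [Set.mem_singleton_iff] at hmem; rw [hmem, hqn])).1 hwq
    · intro hmem
      refine Or.inl ⟨hmem, fun hc => ?_⟩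
      rw [Set.mem_singleton_iff] at hc
      exact hwp (canon_uniq (by rw [hc, hpm])).1
  have h1 := entry_iff_mem B L s w
  have h2 := entry_iff_mem B M t w
  rw [← hzw] at h1
  cases hL : L s (rank B w) <;> cases hM : M t (rank B w) <;> simp_all

end Helpers3
section Helpers4

variable {e r : ℕ}

lemma beads_eq_of_true {B : Fin e → ℕ} {M : Fin r → Fin e → Bool} {s : Fin r} {p : Fin e}
    (h : M s (rank B p) = true) : beads B M s p = B p + 1 := by simp [beads, h]

lemma beads_eq_of_false {B : Fin e → ℕ} {M : Fin r → Fin e → Bool} {s : Fin r} {p : Fin e}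
    (h : M s (rank B p) = false) : beads B M s p = B p := by simp [beads, h]

lemma canon_lt_of_prec (B : Fin e → ℕ) {u v : Fin e} (h : prec B u v) :
    (u : ℤ) + (e : ℤ) * (B u) < (v : ℤ) + (e : ℤ) * (B v) := by
  have hu : (u : ℤ) < (e : ℤ) := by exact_mod_cast u.isLt
  have hv0 : (0 : ℤ) ≤ (v : ℤ) := by positivity
  rcases h with h | ⟨h1, h2⟩
  · have : (e : ℤ) * ((B u : ℤ) + 1) ≤ (e : ℤ) * (B v) := by
      apply mul_le_mul_of_nonneg_left _ (by positivity)
      exact_mod_cast h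
    linarith [this]
  · have h2' : (u : ℤ) < (v : ℤ) := by exact_mod_cast h2
    rw [h1]
    linarith

/-- β-set effect of moving one bead of a single row from runner `v` to runner `u`. -/
lemma Tset_swap (B : Fin e → ℕ) (L M : Fin r → Fin e → Bool) (s t : Fin r)
    (u v : Fin e) (huv : u ≠ v)
    (hLu : L s (rank B u) = false) (hLv : L s (rank B v) = true)
    (hMu : M t (rank B u) = true) (hMv : M t (rank B v) = false)
    (hrest : ∀ i, i ≠ rank B u → i ≠ rank B v → L s i = M t i) :
    Tset B M t = (Tset B L s \ {(v : ℤ) + (e : ℤ) * (B v)}) ∪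
      {(u : ℤ) + (e : ℤ) * (B u)} := by
  have he : 0 < e := u.pos
  have hβv0 : (0 : ℤ) ≤ (v : ℤ) + (e : ℤ) * (B v) := by positivity
  have hβu0 : (0 : ℤ) ≤ (u : ℤ) + (e : ℤ) * (B u) := by positivity
  ext z
  simp only [Set.mem_union, Set.mem_diff, Set.mem_singleton_iff]
  by_cases hzneg : z < 0
  · have h1 : z ∈ Tset B M t := Or.inl hzneg
    have h2 : z ∈ Tset B L s := Or.inl hzneg
    have h3 : z ≠ (v : ℤ) + (e : ℤ) * (B v) := by omega
    constructor
    · intro _; exact Or.inl ⟨h2, h3⟩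
    · intro _; exact h1
  · obtain ⟨w, m, rfl⟩ := Tset_decomp he B (not_lt.mp hzneg)
    have hzequ : ((w : ℤ) + (e : ℤ) * m = (u : ℤ) + (e : ℤ) * (B u)) ↔ (w = u ∧ m = B u) := by
      constructor
      · exact canon_uniq
      · rintro ⟨rfl, rfl⟩; rfl
    have hzeqv : ((w : ℤ) + (e : ℤ) * m = (v : ℤ) + (e : ℤ) * (B v)) ↔ (w = v ∧ m = B v) := by
      constructor
      · exact canon_uniq
      · rintro ⟨rfl, rfl⟩; rfl
    rw [mem_Tset_iff, mem_Tset_iff, hzequ, hzeqv]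
    by_cases hwu : w = u
    · subst hwu
      rw [beads_eq_of_true hMu, beads_eq_of_false hLu]
      have : ¬ (w = v) := huv
      constructor
      · intro hm
        rcases Nat.lt_or_ge m (B w) with h' | h'
        · exact Or.inl ⟨h', fun hc => this hc.1⟩
        · exact Or.inr ⟨rfl, by omega⟩
      · rintro (⟨h', -⟩ | ⟨-, h'⟩) <;> omega
    · by_cases hwv : w = v
      · subst hwv
        rw [beads_eq_of_false hMv, beads_eq_of_true hLv]
        constructor
        · intro hm
          exact Or.inl ⟨by omega, fun hc => by omega⟩
        · rintro (⟨h', h''⟩ | ⟨h', -⟩)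
          · rcases Nat.lt_or_ge m (B w) with h3 | h3
            · exact h3
            · exact absurd ⟨rfl, by omega⟩ h''
          · exact absurd h' hwu
      · have heq : L s (rank B w) = M t (rank B w) :=
          hrest _ (fun hc => hwu (rank_injective B hc)) (fun hc => hwv (rank_injective B hc))
        have hb : beads B L s w = beads B M t w := by simp [beads, heq]
        rw [← hb]
        constructor
        · intro hm
          exact Or.inl ⟨hm, fun hc => hwv hc.1⟩
        · rintro (⟨h', -⟩ | ⟨h', -⟩)
          · exact h'
          · exact absurd h' hwu
end Helpers4
section Helpers5

variable {e r : ℕ}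

lemma sum_split {α : Type*} [Fintype α] [DecidableEq α] (f : α → ℕ) {s t : α} (hst : s ≠ t) :
    ∑ x, f x = f s + f t + ∑ x ∈ (Finset.univ.erase s).erase t, f x := by
  have ht : t ∈ Finset.univ.erase s := Finset.mem_erase.mpr ⟨Ne.symm hst, Finset.mem_univ t⟩
  rw [← Finset.add_sum_erase _ f (Finset.mem_univ s), ← Finset.add_sum_erase _ f ht]
  ring

lemma sum_two_swap {α : Type*} [Fintype α] [DecidableEq α] (f g : α → ℕ) {s t : α}
    (hst : s ≠ t) (hoff : ∀ x, x ≠ s → x ≠ t → f x = g x) :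
    (∑ x, f x = ∑ x, g x) ↔ f s + f t = g s + g t := by
  rw [sum_split f hst, sum_split g hst]
  have : ∑ x ∈ (Finset.univ.erase s).erase t, f x
      = ∑ x ∈ (Finset.univ.erase s).erase t, g x := by
    apply Finset.sum_congr rfl
    intro x hx
    rw [Finset.mem_erase, Finset.mem_erase] at hx
    exact hoff x hx.2.1 hx.1
  omega

abbrev colsum (M : Fin r → Fin e → Bool) (i : Fin e) : ℕ :=
  ∑ s, (if M s i then 1 else 0)

lemma colsum_beadswap {L M : Fin r → Fin e → Bool} (h : BeadSwap L M) (i : Fin e) :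
    colsum L i = colsum M i := by
  obtain ⟨i0, j0, hij, s0, t0, hst, e1, e2, e3, e4, f1, f2, f3, f4, hrest⟩ := h
  by_cases hi : i = i0 ∨ i = j0
  · have hoff : ∀ x : Fin r, x ≠ s0 → x ≠ t0 → (if L x i then 1 else 0) = (if M x i then 1 else 0) := by
      intro x hx1 hx2
      rw [hrest x i (Or.inl ⟨hx1, hx2⟩)]
    rw [sum_two_swap _ _ hst hoff]
    rcases hi with rfl | rfl
    · rw [e1, e4, f1, f4]; simp
    · rw [e2, e3, f2, f3]; simp
  · push_neg at hi
    apply Finset.sum_congr rfl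
    intro x _
    rw [hrest x i (Or.inr ⟨hi.1, hi.2⟩)]

lemma colsum_eqvgen {L M : Fin r → Fin e → Bool} (h : Relation.EqvGen BeadSwap L M)
    (i : Fin e) : colsum L i = colsum M i := by
  induction h with
  | rel x y hxy => exact colsum_beadswap hxy i
  | refl x => rfl
  | symm x y hxy ih => exact ih.symm
  | trans x y z hxy hyz ih1 ih2 => exact ih1.trans ih2

end Helpers5

/-- Matrix characterisation of `Pt(B,L) ⤳ Pt(B,M)` in an
indecomposable core block of weight 2 with `r = 3`. -/
theorem leadsTo_matrix_characterisation (e : ℕ) (he : 2 ≤ e)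
    (B : Fin e → ℕ) (hB : ∃ i, B i = 0)
    (L M : Fin 3 → Fin e → Bool)
    (hLcheck : ∀ i : Fin e, ∃ s : Fin 3, L s i = false)
    (hMcheck : ∀ i : Fin e, ∃ s : Fin 3, M s i = false)
    (hequiv : Relation.EqvGen BeadSwap L M)
    (hwt : wtM L = 2)
    (hind : ∀ S T : Finset (Fin 3), S.Nonempty → T.Nonempty → Disjoint S T →
      S ∪ T = Finset.univ → ∃ s ∈ S, ∃ t ∈ T, 1 ≤ wtPair L s t) :
    LeadsTo B L M ↔
      ∃ i j : Fin e, i < j ∧ ∃ k : Fin 2,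
        L k.castSucc j = true ∧ L k.succ i = true ∧
        M k.castSucc i = true ∧ M k.succ j = true ∧
        L k.castSucc i = false ∧ L k.succ j = false ∧
        M k.castSucc j = false ∧ M k.succ i = false ∧
        (∀ (k' : Fin 3) (i' : Fin e),
          (k' ≠ k.castSucc ∧ k' ≠ k.succ) ∨ (i' ≠ i ∧ i' ≠ j) →
            L k' i' = M k' i') := by
  constructor
  · rintro ⟨k, h, β, β', hh, H1, H2, H3⟩
    obtain ⟨p, q, hpq, hβ, hβh, hLp, hMp, hLq, hMq, hrowk⟩ :=
      hook_analysis B L M k.castSucc k.castSucc hh H1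
    obtain ⟨p', q', hpq', hβ', hβ'h, hMp', hLp', hMq', hLq', hrowk1⟩ :=
      hook_analysis B M L k.succ k.succ hh H2
    have hks : k.castSucc ≠ k.succ := (Fin.castSucc_lt_succ (i := k)).ne
    have hrow_other : ∀ s, s ≠ k.castSucc → s ≠ k.succ → ∀ i, L s i = M s i :=
      fun s h1 h2 => rows_eq_of_Tset_eq B L M s s (H3 s h1 h2)
    -- column sum at column rank B p
    set a := rank B p with ha
    have hcol : colsum L a = colsum M a := colsum_eqvgen hequiv a
    have hoff : ∀ x : Fin 3, x ≠ k.castSucc → x ≠ k.succ →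
        (if L x a then 1 else 0) = (if M x a then 1 else 0) := by
      intro x h1 h2
      rw [hrow_other x h1 h2 a]
    rw [sum_two_swap _ _ hks hoff] at hcol
    rw [hLp, hMp] at hcol
    have hLsucca : L k.succ a = false ∧ M k.succ a = true := by
      cases hx : L k.succ a <;> cases hy : M k.succ a <;> rw [hx, hy] at hcol <;> simp_all
    -- a = rank B p'
    have hap' : a = rank B p' := by
      by_contra hne
      by_cases haq' : a = rank B q'
      · rw [haq', hMq'] at hLsucca; exact absurd hLsucca.2 (by simp)
      · have := hrowk1 a hne haq'
        rw [hLsucca.1, hLsucca.2] at this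
        exact absurd this (by simp)
    have hpp' : p = p' := rank_injective B hap'
    have hββ' : β = β' := by rw [hβ, hβ', hpp']
    have hqq' : q = q' := by
      have : (q : ℤ) + (e : ℤ) * (B q) = (q' : ℤ) + (e : ℤ) * (B q') := by
        rw [← hβh, ← hβ'h, hββ']
      exact (canon_uniq this).1
    -- prec q p
    have hprec : prec B q p := by
      rcases prec_trichot B (Ne.symm hpq) with h' | h'
      · exact h'
      · have := canon_lt_of_prec B h'
        omega
    refine ⟨rank B q, rank B p, rank_lt_of_prec B hprec, k,
      hLp, ?_, hMq, ?_, hLq, ?_, hMp, ?_, ?_⟩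
    · rw [hqq']; exact hLq'
    · exact hLsucca.2
    · exact hLsucca.1
    · rw [hqq']; exact hMq'
    · rintro k' i' (⟨h1, h2⟩ | ⟨h1, h2⟩)
      · exact hrow_other k' h1 h2 i'
      · by_cases hk1 : k' = k.castSucc
        · subst hk1; exact hrowk i' h2 h1
        · by_cases hk2 : k' = k.succ
          · subst hk2
            exact (hrowk1 i' (by rw [← hap']; exact h2) (by rw [← hqq']; exact h1)).symm
          · exact hrow_other k' hk1 hk2 i'
  · rintro ⟨i, j, hij, k, hLj, hLi1, hMi, hMj1, hLi, hLj1, hMj, hMi1, hrest⟩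
    obtain ⟨u, hu⟩ := rank_surjective B i
    obtain ⟨v, hv⟩ := rank_surjective B j
    have huv : u ≠ v := by rintro rfl; rw [hu] at hv; subst hv; exact lt_irrefl _ hij
    have hprec : prec B u v := prec_of_rank_lt B (by rw [hu, hv]; exact hij)
    have hD := canon_lt_of_prec B hprec
    set D : ℤ := ((v : ℤ) + (e : ℤ) * (B v)) - ((u : ℤ) + (e : ℤ) * (B u)) with hDdef
    have hD0 : 0 < D := by omega
    refine ⟨k, D.toNat, (v : ℤ) + (e : ℤ) * (B v), (v : ℤ) + (e : ℤ) * (B v), ?_, ?_, ?_, ?_⟩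
    · omega
    · -- HookRemove (Tset B L k.castSucc) (Tset B M k.castSucc)
      have hsub : (v : ℤ) + (e : ℤ) * (B v) - (D.toNat : ℤ) = (u : ℤ) + (e : ℤ) * (B u) := by
        rw [Int.toNat_of_nonneg hD0.le]; omega
      refine ⟨?_, ?_, ?_⟩
      · rw [← entry_iff_mem, hv]; exact hLj
      · rw [hsub, ← entry_iff_mem, hu]
        rw [hLi]; simp
      · rw [hsub]
        exact Tset_swap B L M k.castSucc k.castSucc u v huv
          (by rw [hu]; exact hLi) (by rw [hv]; exact hLj)
          (by rw [hu]; exact hMi) (by rw [hv]; exact hMj)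
          (fun i' h1 h2 => hrest k.castSucc i'
            (Or.inr ⟨by rw [← hu]; exact h1, by rw [← hv]; exact h2⟩))
    · -- HookRemove (Tset B M k.succ) (Tset B L k.succ)
      have hsub : (v : ℤ) + (e : ℤ) * (B v) - (D.toNat : ℤ) = (u : ℤ) + (e : ℤ) * (B u) := by
        rw [Int.toNat_of_nonneg hD0.le]; omega
      refine ⟨?_, ?_, ?_⟩
      · rw [← entry_iff_mem, hv]; exact hMj1
      · rw [hsub, ← entry_iff_mem, hu]
        rw [hMi1]; simp
      · rw [hsub]
        exact Tset_swap B M L k.succ k.succ u v huv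
          (by rw [hu]; exact hMi1) (by rw [hv]; exact hMj1)
          (by rw [hu]; exact hLi1) (by rw [hv]; exact hLj1)
          (fun i' h1 h2 => (hrest k.succ i'
            (Or.inr ⟨by rw [← hu]; exact h1, by rw [← hv]; exact h2⟩)).symm)
    · intro s h1 h2
      exact Tset_eq_of_rows_eq B L M s s (fun i' => hrest s i' (Or.inl ⟨h1, h2⟩))

end
end AK
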